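/- Let ν be a Borel probability measure on ℝ^n. Then inf{dim_H(E) : E ⊆ ℝ^n Borel, ν(E) = 1} equals the ν-essential supremum over x of the lower local dimension liminf_{r→0⁺} log ν(B(x,r))/log r. -/

import Mathlib

open MeasureTheory Metric Set Filter
open scoped NNReal ENNReal Topology

/-- The lower local dimension of a measure `ν` at a point `x`:
`liminf_{r → 0⁺} log ν(B(x,r)) / log r`, equal to `∞` when `ν(B(x,r)) = 0`
for arbitrarily small `r` (since `log 0 = -∞`). -/
noncomputable def lowerLocalDim {n : ℕ} (ν : Measure (EuclideanSpace ℝ (Fin n)))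
    (x : EuclideanSpace ℝ (Fin n)) : ℝ≥0∞ :=
  Filter.liminf
    (fun r : ℝ => if ν (ball x r) = 0 then ∞
      else ENNReal.ofReal (Real.log (ν (ball x r)).toReal / Real.log r))
    (𝓝[>] (0 : ℝ))

/-- Mass distribution principle: if `ν(B(x,r)) ≤ r^t₀` for all `x` in a measurable set `A`
and all small `r`, and `ν A ≠ 0`, then `dimH A ≥ t₀`. -/
lemma massDist {X : Type*} [MetricSpace X] [MeasurableSpace X] [BorelSpace X]
    (ν : Measure X) {A : Set X} (hA : MeasurableSet A) {t₀ ε : ℝ} (ht : 0 < t₀) (hε : 0 < ε)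
    (h : ∀ x ∈ A, ∀ r : ℝ, 0 < r → r < ε → ν (ball x r) ≤ ENNReal.ofReal (r ^ t₀))
    (hpos : ν A ≠ 0) : ENNReal.ofReal t₀ ≤ dimH A := by
  set c : ℝ≥0∞ := ENNReal.ofReal (2 ^ t₀) with hc
  have hc0 : c ≠ 0 := by
    simp only [hc, ne_eq, ENNReal.ofReal_eq_zero, not_le]
    positivity
  have hctop : c ≠ ∞ := ENNReal.ofReal_ne_top
  have hsing : ∀ x ∈ A, ν {x} = 0 := by
    intro x hx
    have htend : Tendsto (fun r : ℝ => ENNReal.ofReal (r ^ t₀)) (𝓝[>] (0:ℝ)) (𝓝 0) := by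
      have : Tendsto (fun r : ℝ => r ^ t₀) (𝓝[>] (0:ℝ)) (𝓝 0) := by
        have := (Real.continuousAt_rpow_const 0 t₀ (Or.inr ht.le)).tendsto
        simpa [Real.zero_rpow ht.ne'] using this.mono_left nhdsWithin_le_nhds
      simpa [Function.comp_def] using (ENNReal.continuous_ofReal.tendsto 0).comp this
    have hev : ∀ᶠ r in 𝓝[>] (0:ℝ), ν {x} ≤ ENNReal.ofReal (r ^ t₀) := by
      filter_upwards [Ioo_mem_nhdsGT_of_mem (Set.left_mem_Ico.2 hε)] with r hr
      exact le_trans (measure_mono (by simp [Metric.mem_ball, hr.1])) (h x hx r hr.1 hr.2)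
    exact le_antisymm (ge_of_tendsto htend hev) bot_le
  have key : ∀ s : Set X, EMetric.diam s ≤ ENNReal.ofReal (ε/4) →
      (c⁻¹ • ν.restrict A) s ≤ EMetric.diam s ^ t₀ := by
    intro s hs
    rw [Measure.smul_apply, smul_eq_mul, Measure.restrict_apply' hA]
    rcases (s ∩ A).eq_empty_or_nonempty with he | ⟨x, hxs, hxA⟩
    · simp [he]
    set D := EMetric.diam s with hD
    have hDtop : D ≠ ∞ := ne_top_of_le_ne_top ENNReal.ofReal_ne_top hs
    rcases eq_or_ne D 0 with hD0 | hD0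
    · have hsub : s ⊆ {x} := fun y hy => (EMetric.diam_eq_zero_iff.1 hD0) hy hxs
      have : ν (s ∩ A) = 0 :=
        measure_mono_null (le_trans inter_subset_left hsub) (hsing x hxA)
      simp [this]
    · have hDr : 0 < D.toReal := ENNReal.toReal_pos hD0 hDtop
      have hsub : s ⊆ ball x (2 * D.toReal) := by
        intro y hy
        have : edist y x ≤ D := EMetric.edist_le_diam_of_mem hy hxs
        have hd : dist y x ≤ D.toReal := by
          rw [dist_edist]
          exact ENNReal.toReal_mono hDtop this
        exact lt_of_le_of_lt hd (by linarith)
      have hlt : 2 * D.toReal < ε := by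
        have : D.toReal ≤ ε/4 := ENNReal.toReal_le_of_le_ofReal (by linarith) hs
        linarith
      have hball := h x hxA _ (by linarith) hlt
      have hmeas : ν (s ∩ A) ≤ ENNReal.ofReal ((2 * D.toReal) ^ t₀) :=
        le_trans (measure_mono (le_trans inter_subset_left hsub)) hball
      have heq : ENNReal.ofReal ((2 * D.toReal) ^ t₀) = c * D ^ t₀ := by
        rw [Real.mul_rpow (by norm_num) hDr.le, ENNReal.ofReal_mul (by positivity), hc,
          ← ENNReal.ofReal_rpow_of_pos hDr, ENNReal.ofReal_toReal hDtop]
      calc c⁻¹ * ν (s ∩ A) ≤ c⁻¹ * (c * D ^ t₀) := by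
            rw [← heq]; exact mul_le_mul_right hmeas _
        _ = D ^ t₀ := by rw [← mul_assoc, ENNReal.inv_mul_cancel hc0 hctop, one_mul]
  have hle : (c⁻¹ • ν.restrict A) ≤ μH[t₀] :=
    Measure.le_hausdorffMeasure t₀ _ _ (by simp [ENNReal.ofReal_pos]; linarith) key
  have hHpos : μH[t₀] A ≠ 0 := by
    intro h0
    have := Measure.le_iff'.1 hle A
    rw [h0, Measure.smul_apply, smul_eq_mul, Measure.restrict_apply_self] at this
    exact hpos (by simpa [hc0, ENNReal.inv_eq_zero, hctop] using
      (nonpos_iff_eq_zero.1 this))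
  by_contra hlt
  push_neg at hlt
  have hco : ((t₀.toNNReal : ℝ≥0) : ℝ≥0∞) = ENNReal.ofReal t₀ := rfl
  have h1 : dimH A < ((t₀.toNNReal : ℝ≥0) : ℝ≥0∞) := by rwa [hco]
  have := hausdorffMeasure_of_dimH_lt h1
  rw [Real.coe_toNNReal t₀ ht.le] at this
  exact hHpos this

/-- Vitali covering bound: if every point of `S` has arbitrarily small radii `r`
with `ν(B(x,r)) ≥ r^s`, then `dimH S ≤ s`. -/
lemma dimH_le_of_freq {X : Type*} [MetricSpace X] [MeasurableSpace X] [BorelSpace X]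
    (ν : Measure X) [IsFiniteMeasure ν] {S : Set X} {s : ℝ≥0} (hs : 0 < s)
    (h : ∀ x ∈ S, ∀ δ : ℝ, 0 < δ →
      ∃ r : ℝ, 0 < r ∧ r < δ ∧ ENNReal.ofReal (r ^ (s:ℝ)) ≤ ν (ball x r)) :
    dimH S ≤ (s : ℝ≥0∞) := by
  have hs' : (0:ℝ) < (s:ℝ) := hs
  have h' : ∀ (k : ℕ) (x : X), x ∈ S → ∃ r : ℝ, 0 < r ∧ r < 1/(k+1) ∧
      ENNReal.ofReal (r ^ (s:ℝ)) ≤ ν (ball x r) := fun k x hx => h x hx _ (by positivity)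
  choose! rad h1 h2 h3 using h'
  have hV : ∀ k : ℕ, ∃ u ⊆ S, (u.PairwiseDisjoint fun a => closedBall a (rad k a)) ∧
      ∀ a ∈ S, ∃ b ∈ u, closedBall a (rad k a) ⊆ closedBall b (4 * rad k b) := by
    intro k
    have hb : ∀ a ∈ S, rad k a ≤ 1 := by
      intro a ha
      have := h2 k a ha
      have h1k : 1/((k:ℝ)+1) ≤ 1 := by
        rw [div_le_one (by positivity)]; linarith [Nat.cast_nonneg (α := ℝ) k]
      linarith
    simpa using Vitali.exists_disjoint_subfamily_covering_enlargement_closedBall S id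
      (rad k) 1 hb 4 (by norm_num)
  choose u hu hdisj hcov using hV
  have hballpos : ∀ k, ∀ b ∈ u k, 0 < ν (closedBall b (rad k b)) := by
    intro k b hb
    refine lt_of_lt_of_le ?_ ((h3 k b (hu k hb)).trans (measure_mono ball_subset_closedBall))
    exact ENNReal.ofReal_pos.2 (Real.rpow_pos_of_pos (h1 k b (hu k hb)) _)
  have hcnt : ∀ k, (u k).Countable := by
    intro k
    have hpair : Pairwise (Function.onFun Disjoint fun b : ↥(u k) => closedBall (b:X) (rad k b)) := by
      intro i j hij
      exact (hdisj k) i.2 j.2 (Subtype.coe_injective.ne hij)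
    have := Measure.countable_meas_pos_of_disjoint_iUnion (μ := ν)
      (As := fun b : ↥(u k) => closedBall (b:X) (rad k b))
      (fun _ => measurableSet_closedBall) hpair
    have huniv : {i : ↥(u k) | 0 < ν (closedBall (i:X) (rad k i))} = univ :=
      eq_univ_of_forall fun b => hballpos k b b.2
    rw [huniv, Set.countable_univ_iff] at this
    exact Set.countable_coe_iff.1 this
  haveI : ∀ k, Countable ↥(u k) := fun k => (hcnt k).to_subtype
  have htend : Tendsto (fun k : ℕ => ENNReal.ofReal (8/((k:ℝ)+1))) atTop (𝓝 0) := by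
    have h0 : Tendsto (fun k : ℕ => 8/((k:ℝ)+1)) atTop (𝓝 0) := by
      have h8 := tendsto_one_div_add_atTop_nhds_zero_nat.const_mul (8:ℝ)
      rw [mul_zero] at h8
      refine h8.congr fun k => ?_
      ring
    simpa [Function.comp_def] using (ENNReal.continuous_ofReal.tendsto 0).comp h0
  have hdiam : ∀ (k : ℕ) (b : ↥(u k)),
      EMetric.diam (closedBall (b:X) (4 * rad k b)) ≤ ENNReal.ofReal (8/((k:ℝ)+1)) := by
    intro k b
    have hr : 0 < rad k b := h1 k b (hu k b.2)
    calc EMetric.diam (closedBall (b:X) (4 * rad k b))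
        ≤ 2 * ENNReal.ofReal (4 * rad k b) := by
          rw [← Metric.emetric_closedBall (by linarith)]
          exact EMetric.diam_closedBall
      _ = ENNReal.ofReal (8 * rad k b) := by
          rw [show (2:ℝ≥0∞) = ENNReal.ofReal 2 by norm_num, ← ENNReal.ofReal_mul (by norm_num)]
          ring_nf
      _ ≤ ENNReal.ofReal (8/((k:ℝ)+1)) := by
          apply ENNReal.ofReal_le_ofReal
          have h2b := h2 k b (hu k b.2)
          have hk0 : (0:ℝ) < (k:ℝ)+1 := by positivity
          rw [lt_div_iff₀ hk0] at h2b
          rw [le_div_iff₀ hk0]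
          nlinarith
  have hcover : ∀ k : ℕ, S ⊆ ⋃ b : ↥(u k), closedBall (b:X) (4 * rad k b) := by
    intro k a ha
    obtain ⟨b, hb, hsub⟩ := hcov k a ha
    exact mem_iUnion.2 ⟨⟨b, hb⟩, hsub (mem_closedBall_self (h1 k a ha).le)⟩
  have key := Measure.hausdorffMeasure_le_liminf_tsum (s:ℝ) S
    (fun k : ℕ => ENNReal.ofReal (8/((k:ℝ)+1))) htend
    (fun k (b : ↥(u k)) => closedBall (b:X) (4 * rad k b))
    (Eventually.of_forall hdiam) (Eventually.of_forall hcover)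
  set C : ℝ≥0∞ := ENNReal.ofReal ((8:ℝ) ^ (s:ℝ)) * ν univ with hC
  have hsum : ∀ k : ℕ,
      (∑' b : ↥(u k), EMetric.diam (closedBall (b:X) (4 * rad k b)) ^ (s:ℝ)) ≤ C := by
    intro k
    have hterm : ∀ b : ↥(u k),
        EMetric.diam (closedBall (b:X) (4 * rad k b)) ^ (s:ℝ) ≤
          ENNReal.ofReal ((8:ℝ) ^ (s:ℝ)) * ν (closedBall (b:X) (rad k b)) := by
      intro b
      have hr : 0 < rad k b := h1 k b (hu k b.2)
      have hd : EMetric.diam (closedBall (b:X) (4 * rad k b)) ≤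
          ENNReal.ofReal (8 * rad k b) := by
        rw [← Metric.emetric_closedBall (by linarith)]
        refine le_trans EMetric.diam_closedBall ?_
        rw [show (2:ℝ≥0∞) = ENNReal.ofReal 2 by norm_num, ← ENNReal.ofReal_mul (by norm_num)]
        apply ENNReal.ofReal_le_ofReal; linarith
      calc EMetric.diam (closedBall (b:X) (4 * rad k b)) ^ (s:ℝ)
          ≤ ENNReal.ofReal (8 * rad k b) ^ (s:ℝ) :=
            ENNReal.rpow_le_rpow hd hs'.le
        _ = ENNReal.ofReal ((8:ℝ) ^ (s:ℝ)) * ENNReal.ofReal ((rad k b) ^ (s:ℝ)) := by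
            rw [ENNReal.ofReal_rpow_of_pos (by linarith), Real.mul_rpow (by norm_num) hr.le,
              ENNReal.ofReal_mul (by positivity)]
        _ ≤ ENNReal.ofReal ((8:ℝ) ^ (s:ℝ)) * ν (closedBall (b:X) (rad k b)) :=
            mul_le_mul_right ((h3 k b (hu k b.2)).trans
              (measure_mono ball_subset_closedBall)) _
    calc (∑' b : ↥(u k), EMetric.diam (closedBall (b:X) (4 * rad k b)) ^ (s:ℝ))
        ≤ ∑' b : ↥(u k), ENNReal.ofReal ((8:ℝ) ^ (s:ℝ)) * ν (closedBall (b:X) (rad k b)) :=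
          ENNReal.tsum_le_tsum hterm
      _ = ENNReal.ofReal ((8:ℝ) ^ (s:ℝ)) * ∑' b : ↥(u k), ν (closedBall (b:X) (rad k b)) :=
          ENNReal.tsum_mul_left
      _ ≤ C := by
          rw [hC]
          refine mul_le_mul_right ?_ _
          rw [← measure_biUnion (hcnt k) (hdisj k) (fun _ _ => measurableSet_closedBall)]
          exact measure_mono (subset_univ _)
  have hfin : μH[(s:ℝ)] S ≤ C := by
    refine key.trans ?_
    refine le_trans (liminf_le_liminf (Eventually.of_forall hsum)) ?_
    simp [liminf_const]
  exact dimH_le_of_hausdorffMeasure_ne_top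
    (ne_top_of_le_ne_top (by finiteness) hfin)


theorem stmt_3 (n : ℕ) (ν : Measure (EuclideanSpace ℝ (Fin n)))
    [IsProbabilityMeasure ν] :
    (⨅ (E : Set (EuclideanSpace ℝ (Fin n))) (_ : MeasurableSet E) (_ : ν E = 1), dimH E)
      = essSup (lowerLocalDim ν) ν := by
  set L := essSup (lowerLocalDim ν) ν with hLdef
  apply le_antisymm
  · -- inf ≤ essSup
    by_cases htop : L = ∞
    · rw [htop]
      exact le_top
    · have hae : ∀ᵐ x ∂ν, lowerLocalDim ν x ≤ L := ENNReal.ae_le_essSup _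
      set S := {x : EuclideanSpace ℝ (Fin n) | lowerLocalDim ν x ≤ L} with hSdef
      have hnull : ν Sᶜ = 0 := by
        have hcs : Sᶜ = {x | ¬ lowerLocalDim ν x ≤ L} := by rw [hSdef, compl_setOf]
        rw [hcs]
        rwa [ae_iff] at hae
      set E := (toMeasurable ν Sᶜ)ᶜ with hEdef
      have hEm : MeasurableSet E := (measurableSet_toMeasurable ν _).compl
      have hE1 : ν E = 1 := by
        have h0 : ν (toMeasurable ν Sᶜ) = 0 := by rw [measure_toMeasurable]; exact hnull
        rw [hEdef, measure_compl (measurableSet_toMeasurable ν _) (by finiteness), h0,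
          measure_univ]
        simp
      have hES : E ⊆ S := fun x hx => by
        by_contra hxS; exact hx (subset_toMeasurable ν Sᶜ hxS)
      have hstep : ∀ s : ℝ≥0, L.toReal < (s:ℝ) → dimH S ≤ (s : ℝ≥0∞) := by
        intro s hsL
        have hspos : (0:ℝ) < (s:ℝ) := lt_of_le_of_lt ENNReal.toReal_nonneg hsL
        refine dimH_le_of_freq ν (by exact_mod_cast hspos) ?_
        intro x hx δ hδ
        have hlim : lowerLocalDim ν x < ENNReal.ofReal s :=
          lt_of_le_of_lt hx ((ENNReal.lt_ofReal_iff_toReal_lt htop).2 hsL)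
        rw [lowerLocalDim] at hlim
        have hfreq := frequently_lt_of_liminf_lt (by isBoundedDefault) hlim
        obtain ⟨r, hrmem, hrlt⟩ := frequently_iff.1 hfreq
          (Ioo_mem_nhdsGT_of_mem (Set.left_mem_Ico.2 (lt_min hδ one_pos)))
        have hr0 : 0 < r := hrmem.1
        have hr1 : r < 1 := lt_of_lt_of_le hrmem.2 (min_le_right _ _)
        have hrδ : r < δ := lt_of_lt_of_le hrmem.2 (min_le_left _ _)
        by_cases hb : ν (ball x r) = 0
        · rw [if_pos hb] at hrlt
          exact absurd hrlt (not_lt.2 le_top)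
        · rw [if_neg hb] at hrlt
          have hq : Real.log (ν (ball x r)).toReal / Real.log r < (s:ℝ) :=
            (ENNReal.ofReal_lt_ofReal_iff hspos).1 hrlt
          have hlogr : Real.log r < 0 := Real.log_neg hr0 hr1
          have hBpos : 0 < (ν (ball x r)).toReal :=
            ENNReal.toReal_pos hb (measure_ne_top ν _)
          have hlog : Real.log (r ^ (s:ℝ)) < Real.log (ν (ball x r)).toReal := by
            rw [Real.log_rpow hr0]
            exact (div_lt_iff_of_neg hlogr).1 hq
          have hrs : r ^ (s:ℝ) < (ν (ball x r)).toReal :=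
            (Real.log_lt_log_iff (Real.rpow_pos_of_pos hr0 _) hBpos).1 hlog
          refine ⟨r, hr0, hrδ, ?_⟩
          calc ENNReal.ofReal (r ^ (s:ℝ)) ≤ ENNReal.ofReal (ν (ball x r)).toReal :=
                ENNReal.ofReal_le_ofReal hrs.le
            _ = ν (ball x r) := ENNReal.ofReal_toReal (measure_ne_top ν _)
      have hdim : dimH S ≤ L := by
        by_contra hcon
        push_neg at hcon
        obtain ⟨q, hq0, hq1, hq2⟩ := ENNReal.lt_iff_exists_real_btwn.1 hcon
        have hq' : L.toReal < (q.toNNReal : ℝ) := by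
          rw [Real.coe_toNNReal q hq0]
          exact (ENNReal.lt_ofReal_iff_toReal_lt htop).1 hq1
        have h2 := hstep q.toNNReal hq'
        have : dimH S ≤ ENNReal.ofReal q := h2
        exact absurd (lt_of_le_of_lt this hq2) (lt_irrefl _)
      exact le_trans (iInf_le_of_le E (iInf_le_of_le hEm (iInf_le _ hE1)))
        (le_trans (dimH_mono hES) hdim)
  · -- essSup ≤ inf
    refine le_iInf fun E => le_iInf fun hEm => le_iInf fun hE1 => ?_
    refine le_of_forall_lt fun t ht => ?_
    obtain ⟨t₀, ht₀0, ht1, ht2⟩ := ENNReal.lt_iff_exists_real_btwn.1 ht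
    have ht₀pos : 0 < t₀ := by
      by_contra hneg
      push_neg at hneg
      rw [ENNReal.ofReal_eq_zero.2 hneg] at ht1
      simp at ht1
    refine lt_of_lt_of_le ht1 ?_
    set T := {x : EuclideanSpace ℝ (Fin n) | ENNReal.ofReal t₀ < lowerLocalDim ν x} with hTdef
    have hTpos : ν T ≠ 0 := by
      intro h0
      have hle : ∀ᵐ x ∂ν, lowerLocalDim ν x ≤ ENNReal.ofReal t₀ := by
        rw [ae_iff]
        have : {x | ¬ lowerLocalDim ν x ≤ ENNReal.ofReal t₀} = T := by
          ext x; simp [hTdef, not_le]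
        rw [this]; exact h0
      exact absurd (essSup_le_of_ae_le _ hle) (not_le.2 ht2)
    set C : ℕ → Set (EuclideanSpace ℝ (Fin n)) := fun m =>
      {x | ∀ r : ℝ, 0 < r → r < 1/(m+1) → ν (ball x r) ≤ ENNReal.ofReal (r ^ t₀)} with hCdef
    have hCclosed : ∀ m, IsClosed (C m) := by
      intro m
      refine isClosed_of_closure_subset ?_
      intro x hx r hr0 hrm
      have hkey : ∀ᶠ η in 𝓝[>] (0:ℝ), ν (ball x r) ≤ ENNReal.ofReal ((r+η) ^ t₀) := by
        filter_upwards [Ioo_mem_nhdsGT_of_mem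
          (Set.left_mem_Ico.2 (show (0:ℝ) < 1/(m+1) - r by linarith))] with η hη
        obtain ⟨y, hyC, hxy⟩ := Metric.mem_closure_iff.1 hx η hη.1
        have hsub : ball x r ⊆ ball y (r + η) := by
          intro z hz
          rw [mem_ball] at hz ⊢
          calc dist z y ≤ dist z x + dist x y := dist_triangle z x y
            _ < r + η := by rw [dist_comm x y] at hxy ⊢; linarith [dist_comm z x ▸ hz]
        refine le_trans (measure_mono hsub) (hyC (r+η) (by linarith [hη.1]) ?_)
        linarith [hη.2]
      have htend : Tendsto (fun η : ℝ => ENNReal.ofReal ((r+η) ^ t₀)) (𝓝[>] (0:ℝ))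
          (𝓝 (ENNReal.ofReal (r ^ t₀))) := by
        have h1 : Tendsto (fun η : ℝ => (r+η) ^ t₀) (𝓝 (0:ℝ)) (𝓝 (r ^ t₀)) := by
          have hadd : Tendsto (fun η : ℝ => r + η) (𝓝 (0:ℝ)) (𝓝 r) := by
            simpa [Pi.add_def] using (continuous_const.add continuous_id).tendsto (0:ℝ)
          exact ((Real.continuousAt_rpow_const r t₀ (Or.inl hr0.ne')).tendsto).comp hadd
        exact ((ENNReal.continuous_ofReal.tendsto _).comp h1).mono_left nhdsWithin_le_nhds
      exact ge_of_tendsto htend hkey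
    have hTsub : T ⊆ ⋃ m, C m := by
      intro x hx
      have hev : ∀ᶠ r in 𝓝[>] (0:ℝ), ENNReal.ofReal t₀ <
          (if ν (ball x r) = 0 then (∞:ℝ≥0∞)
            else ENNReal.ofReal (Real.log (ν (ball x r)).toReal / Real.log r)) := by
        have := hx
        rw [hTdef, mem_setOf_eq, lowerLocalDim] at this
        exact eventually_lt_of_lt_liminf this
      obtain ⟨w, hw, hsub⟩ := mem_nhdsGT_iff_exists_Ioo_subset.1 hev
      obtain ⟨m, hm⟩ := exists_nat_one_div_lt (show (0:ℝ) < min w 1 by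
        simp [lt_min_iff]; exact hw)
      refine mem_iUnion.2 ⟨m, ?_⟩
      intro r hr0 hrm
      have hrw : r < w := by
        have h1 : (1:ℝ)/(m+1) < min w 1 := hm
        have := lt_min_iff.1 h1
        linarith
      have hr1 : r < 1 := by
        have h1 : (1:ℝ)/(m+1) < min w 1 := hm
        have := lt_min_iff.1 h1
        linarith
      have hgr := hsub ⟨hr0, hrw⟩
      simp only [mem_setOf_eq] at hgr
      by_cases hb : ν (ball x r) = 0
      · rw [hb]; exact zero_le
      · rw [if_neg hb] at hgr
        have hq : t₀ < Real.log (ν (ball x r)).toReal / Real.log r :=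
          (ENNReal.ofReal_lt_ofReal_iff_of_nonneg ht₀pos.le).1 hgr
        have hlogr : Real.log r < 0 := Real.log_neg hr0 hr1
        have hBpos : 0 < (ν (ball x r)).toReal :=
          ENNReal.toReal_pos hb (measure_ne_top ν _)
        have hlog : Real.log (ν (ball x r)).toReal < Real.log (r ^ t₀) := by
          rw [Real.log_rpow hr0]
          exact (lt_div_iff_of_neg hlogr).1 hq
        have hrs : (ν (ball x r)).toReal < r ^ t₀ :=
          (Real.log_lt_log_iff hBpos (Real.rpow_pos_of_pos hr0 _)).1 hlog
        calc ν (ball x r) = ENNReal.ofReal (ν (ball x r)).toReal :=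
              (ENNReal.ofReal_toReal (measure_ne_top ν _)).symm
          _ ≤ ENNReal.ofReal (r ^ t₀) := ENNReal.ofReal_le_ofReal hrs.le
    have hEc : ν Eᶜ = 0 := by
      rw [measure_compl hEm (by finiteness), hE1, measure_univ]
      simp
    have hTE : ν (T ∩ E) ≠ 0 := by
      intro h0
      have hle : ν T ≤ ν (T ∩ E) + ν Eᶜ := by
        refine le_trans (measure_mono ?_) (measure_union_le _ _)
        intro x hx
        by_cases hxE : x ∈ E
        · exact Or.inl ⟨hx, hxE⟩
        · exact Or.inr hxE
      rw [h0, hEc] at hle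
      simp at hle
      exact hTpos hle
    have hex : ∃ m, ν (C m ∩ E) ≠ 0 := by
      by_contra hall
      push_neg at hall
      have hsub2 : T ∩ E ⊆ ⋃ m, (C m ∩ E) := by
        intro x hx
        obtain ⟨m, hm⟩ := mem_iUnion.1 (hTsub hx.1)
        exact mem_iUnion.2 ⟨m, hm, hx.2⟩
      have : ν (T ∩ E) ≤ ∑' m, ν (C m ∩ E) :=
        le_trans (measure_mono hsub2) (measure_iUnion_le _)
      simp [hall] at this
      exact hTE this
    obtain ⟨m, hm⟩ := hex
    have hmeas : MeasurableSet (C m ∩ E) := (hCclosed m).measurableSet.inter hEm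
    have hmd := massDist ν hmeas ht₀pos (show (0:ℝ) < 1/((m:ℝ)+1) by positivity)
      (fun x hx r hhr0 hhr1 => hx.1 r hhr0 hhr1) hm
    exact le_trans hmd (dimH_mono inter_subset_right)
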